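/- For any adaptive policy π of length k on an arbitrary influence graph under the independent cascade model with full-adoption feedback, σ(π) ≤ k·OPT_N(G,1) ≤ k·OPT_N(G,k). In particular, the k-adaptivity gap of any class of influence graphs is at most k. -/

import Mathlib

open Finset

/-- Probability of a live-edge graph `L`: each potential directed edge `e` is
included independently with probability `p e`. -/
noncomputable def liveProb {V : Type*} [Fintype V] [DecidableEq V]
    (p : V × V → ℝ) (L : Finset (V × V)) : ℝ :=
  (∏ e ∈ L, p e) * ∏ e ∈ Lᶜ, (1 - p e)

/-- Nodes reached from the seed set `S` in the live-edge graph `L`. -/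
noncomputable def reachSet {V : Type*} [Fintype V] [DecidableEq V]
    (L : Finset (V × V)) (S : Finset V) : Finset V := by
  classical
  exact Finset.univ.filter fun v =>
    ∃ u ∈ S, Relation.ReflTransGen (fun a b => (a, b) ∈ L) u v

/-- The seed set selected by the adaptive policy `π` after `t` steps on the
live-edge graph `L`, under full-adoption feedback: at each step the policy sees
the current seeds and the realisation restricted to them. -/
noncomputable def runPolicy {V : Type*} [Fintype V] [DecidableEq V]
    (π : Finset V → (V → Finset V) → V) (L : Finset (V × V)) : ℕ → Finset V
  | 0 => ∅
  | t + 1 =>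
      let S := runPolicy π L t
      insert (π S fun v => if v ∈ S then reachSet L {v} else ∅) S

/-- Expected influence spread of an adaptive policy `π` run for `k` steps. -/
noncomputable def adaptiveSpread {V : Type*} [Fintype V] [DecidableEq V]
    (p : V × V → ℝ) (π : Finset V → (V → Finset V) → V) (k : ℕ) : ℝ :=
  ∑ L : Finset (V × V), liveProb p L * ((reachSet L (runPolicy π L k)).card : ℝ)

/-- Expected influence spread of a fixed (non-adaptive) seed set `S`. -/
noncomputable def spread {V : Type*} [Fintype V] [DecidableEq V]
    (p : V × V → ℝ) (S : Finset V) : ℝ :=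
  ∑ L : Finset (V × V), liveProb p L * ((reachSet L S).card : ℝ)

section aux
variable {V : Type*} [Fintype V] [DecidableEq V]

lemma mem_reachSet {L : Finset (V × V)} {S : Finset V} {w : V} :
    w ∈ reachSet L S ↔ ∃ u ∈ S, Relation.ReflTransGen (fun a b => (a, b) ∈ L) u w := by
  simp [reachSet]

lemma subset_reachSet {L : Finset (V × V)} {S : Finset V} : S ⊆ reachSet L S :=
  fun v hv => mem_reachSet.2 ⟨v, hv, .refl⟩

lemma reachSet_closed {L : Finset (V × V)} {S : Finset V} {u v : V}
    (hu : u ∈ reachSet L S) (h : (u, v) ∈ L) : v ∈ reachSet L S := by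
  obtain ⟨x, hx, hp⟩ := mem_reachSet.1 hu
  exact mem_reachSet.2 ⟨x, hx, hp.tail h⟩

lemma reachSet_mono_seed {L : Finset (V × V)} {S T : Finset V} (h : S ⊆ T) :
    reachSet L S ⊆ reachSet L T := by
  intro w hw; obtain ⟨u, hu, hp⟩ := mem_reachSet.1 hw
  exact mem_reachSet.2 ⟨u, h hu, hp⟩

lemma reachSet_mono_edges {L M : Finset (V × V)} (h : L ⊆ M) (S : Finset V) :
    reachSet L S ⊆ reachSet M S := by
  intro w hw; obtain ⟨u, hu, hp⟩ := mem_reachSet.1 hw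
  exact mem_reachSet.2 ⟨u, hu, by
    clear hw
    induction hp with
    | refl => exact .refl
    | tail _ hbc ih => exact ih.tail (h hbc)⟩

lemma reachSet_empty {L : Finset (V × V)} : reachSet L (∅ : Finset V) = ∅ := by
  ext w; simp [mem_reachSet]

lemma reachSet_congr {L M : Finset (V × V)} {S : Finset V}
    (h : ∀ e : V × V, e.1 ∈ reachSet L S → (e ∈ M ↔ e ∈ L)) :
    reachSet M S = reachSet L S := by
  have key : ∀ u ∈ S, ∀ w, Relation.ReflTransGen (fun a b => (a, b) ∈ L) u w →
      w ∈ reachSet L S ∧ Relation.ReflTransGen (fun a b => (a, b) ∈ M) u w := by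
    intro u hu w hw
    induction hw with
    | refl => exact ⟨subset_reachSet hu, .refl⟩
    | tail hxb hbc ih => exact ⟨reachSet_closed ih.1 hbc, ih.2.tail ((h _ ih.1).2 hbc)⟩
  have key2 : ∀ u ∈ S, ∀ w, Relation.ReflTransGen (fun a b => (a, b) ∈ M) u w →
      w ∈ reachSet L S := by
    intro u hu w hw
    induction hw with
    | refl => exact subset_reachSet hu
    | tail hxb hbc ih => exact reachSet_closed ih ((h _ ih).1 hbc)
  ext w
  constructor
  · intro hw; obtain ⟨u, hu, hp⟩ := mem_reachSet.1 hw; exact key2 u hu w hp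
  · intro hw; obtain ⟨u, hu, hp⟩ := mem_reachSet.1 hw
    exact mem_reachSet.2 ⟨u, hu, (key u hu w hp).2⟩

lemma gain_subset (L : Finset (V × V)) (S : Finset V) (v : V) :
    reachSet L (insert v S) \ reachSet L S ⊆
      reachSet (L.filter fun e => e.1 ∉ reachSet L S) {v} := by
  intro w hw
  rw [mem_sdiff] at hw
  obtain ⟨hw1, hw2⟩ := hw
  obtain ⟨u, hu, hp⟩ := mem_reachSet.1 hw1
  rcases mem_insert.1 hu with rfl | hu'
  · -- path from v
    have key : ∀ w, Relation.ReflTransGen (fun a b => (a, b) ∈ L) u w →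
        w ∉ reachSet L S →
        Relation.ReflTransGen
          (fun a b => (a, b) ∈ L.filter fun e => e.1 ∉ reachSet L S) u w := by
      intro w hw
      induction hw with
      | refl => intro _; exact .refl
      | @tail b c hxb hbc ih =>
          intro hc
          have hb : b ∉ reachSet L S := fun hb => hc (reachSet_closed hb hbc)
          exact (ih hb).tail (mem_filter.2 ⟨hbc, hb⟩)
    exact mem_reachSet.2 ⟨u, mem_singleton_self u, key w hp hw2⟩
  · exact absurd (mem_reachSet.2 ⟨u, hu', hp⟩) hw2

lemma runPolicy_succ (π : Finset V → (V → Finset V) → V) (L : Finset (V × V)) (t : ℕ) :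
    runPolicy π L (t + 1) =
      insert (π (runPolicy π L t)
        fun v => if v ∈ runPolicy π L t then reachSet L {v} else ∅) (runPolicy π L t) := rfl

lemma runPolicy_mono (π : Finset V → (V → Finset V) → V) (L : Finset (V × V)) :
    Monotone (runPolicy π L) := by
  apply monotone_nat_of_le_succ
  intro t
  rw [runPolicy_succ]
  exact subset_insert _ _


lemma liveProb_eq (p : V × V → ℝ) (L : Finset (V × V)) :
    liveProb p L = ∏ e : V × V, (if e ∈ L then p e else 1 - p e) := by
  classical
  rw [Finset.prod_ite, liveProb]
  congr 1
  · apply Finset.prod_congr _ (fun _ _ => rfl)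
    ext e; simp
  · apply Finset.prod_congr _ (fun _ _ => rfl)
    ext e; simp

lemma liveProb_nonneg {p : V × V → ℝ} (hp : ∀ e, 0 ≤ p e ∧ p e ≤ 1)
    (L : Finset (V × V)) : 0 ≤ liveProb p L := by
  rw [liveProb_eq]
  apply Finset.prod_nonneg
  intro e _
  by_cases he : e ∈ L <;> simp [he, (hp e).1, sub_nonneg.2 (hp e).2]

lemma sum_liveProb (p : V × V → ℝ) :
    ∑ L : Finset (V × V), liveProb p L = 1 := by
  classical
  have h := Finset.prod_add (fun e : V × V => p e) (fun e => 1 - p e) Finset.univ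
  simp only [add_sub_cancel, Finset.prod_const_one] at h
  rw [Finset.powerset_univ] at h
  rw [h]
  apply Finset.sum_congr rfl
  intro L _
  rw [liveProb, Finset.compl_eq_univ_sdiff]

variable (π : Finset V → (V → Finset V) → V)

noncomputable def seedAt (L : Finset (V × V)) (t : ℕ) : V :=
  π (runPolicy π L t) fun v => if v ∈ runPolicy π L t then reachSet L {v} else ∅

lemma runPolicy_succ' (L : Finset (V × V)) (t : ℕ) :
    runPolicy π L (t + 1) = insert (seedAt π L t) (runPolicy π L t) := rfl

lemma runPolicy_congr {L M : Finset (V × V)} (t : ℕ)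
    (h : ∀ e : V × V, e.1 ∈ reachSet L (runPolicy π L t) → (e ∈ M ↔ e ∈ L)) :
    ∀ s, s ≤ t → runPolicy π M s = runPolicy π L s := by
  intro s
  induction s with
  | zero => intro _; rfl
  | succ s ih =>
    intro hs
    have hS := ih (Nat.le_of_succ_le hs)
    have hfeed : (fun v => if v ∈ runPolicy π L s then reachSet M {v} else ∅)
        = fun v => if v ∈ runPolicy π L s then reachSet L {v} else ∅ := by
      funext v
      by_cases hv : v ∈ runPolicy π L s
      · simp only [hv, if_true]
        apply reachSet_congr
        intro e he
        apply h
        have hsub : reachSet L {v} ⊆ reachSet L (runPolicy π L t) :=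
          reachSet_mono_seed (Finset.singleton_subset_iff.2
            (runPolicy_mono π L (Nat.le_of_succ_le hs) hv))
        exact hsub he
      · simp [hv]
    rw [runPolicy_succ, runPolicy_succ, hS, hfeed]

lemma seedAt_congr {L M : Finset (V × V)} (t : ℕ)
    (h : ∀ e : V × V, e.1 ∈ reachSet L (runPolicy π L t) → (e ∈ M ↔ e ∈ L)) :
    seedAt π M t = seedAt π L t := by
  have hfeed : (fun v => if v ∈ runPolicy π L t then reachSet M {v} else ∅)
      = fun v => if v ∈ runPolicy π L t then reachSet L {v} else ∅ := by
    funext v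
    by_cases hv : v ∈ runPolicy π L t
    · simp only [hv, if_true]
      apply reachSet_congr
      intro e he
      exact h e (reachSet_mono_seed (Finset.singleton_subset_iff.2 hv) he)
    · simp [hv]
  rw [seedAt, seedAt, runPolicy_congr π t h t le_rfl, hfeed]

lemma reachSet_run_congr {L M : Finset (V × V)} (t : ℕ)
    (h : ∀ e : V × V, e.1 ∈ reachSet L (runPolicy π L t) → (e ∈ M ↔ e ∈ L)) :
    reachSet M (runPolicy π M t) = reachSet L (runPolicy π L t) := by
  rw [runPolicy_congr π t h t le_rfl]
  exact reachSet_congr h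

noncomputable def Rst (L : Finset (V × V)) (t : ℕ) : Finset V :=
  reachSet L (runPolicy π L t)

noncomputable def mg (t : ℕ) (L K : Finset (V × V)) : Finset (V × V) :=
  L.filter (fun e => e.1 ∈ Rst π L t) ∪ K.filter (fun e => e.1 ∉ Rst π L t)

noncomputable def mg2 (t : ℕ) (L K : Finset (V × V)) : Finset (V × V) :=
  K.filter (fun e => e.1 ∈ Rst π L t) ∪ L.filter (fun e => e.1 ∉ Rst π L t)

lemma mg_agree (t : ℕ) (L K : Finset (V × V)) :
    ∀ e : V × V, e.1 ∈ reachSet L (runPolicy π L t) → (e ∈ mg π t L K ↔ e ∈ L) := by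
  intro e he
  have he' : e.1 ∈ Rst π L t := he
  rw [mg, Finset.mem_union, Finset.mem_filter, Finset.mem_filter]
  tauto

lemma Rst_mg (t : ℕ) (L K : Finset (V × V)) :
    Rst π (mg π t L K) t = Rst π L t :=
  reachSet_run_congr π t (mg_agree π t L K)

lemma seedAt_mg (t : ℕ) (L K : Finset (V × V)) :
    seedAt π (mg π t L K) t = seedAt π L t :=
  seedAt_congr π t (mg_agree π t L K)

lemma mg_free (t : ℕ) (L K : Finset (V × V)) :
    (mg π t L K).filter (fun e => e.1 ∉ Rst π (mg π t L K) t)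
      = K.filter (fun e => e.1 ∉ Rst π L t) := by
  rw [Rst_mg]
  ext e
  simp only [mg, Finset.mem_filter, Finset.mem_union]
  tauto

lemma mg_mg (t : ℕ) (L K : Finset (V × V)) :
    mg π t (mg π t L K) (mg2 π t L K) = L := by
  show (mg π t L K).filter (fun e => e.1 ∈ Rst π (mg π t L K) t)
      ∪ (mg2 π t L K).filter (fun e => e.1 ∉ Rst π (mg π t L K) t) = L
  rw [Rst_mg]
  ext e
  simp only [mg, mg2, Finset.mem_filter, Finset.mem_union]
  tauto

lemma mg2_mg (t : ℕ) (L K : Finset (V × V)) :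
    mg2 π t (mg π t L K) (mg2 π t L K) = K := by
  show (mg2 π t L K).filter (fun e => e.1 ∈ Rst π (mg π t L K) t)
      ∪ (mg π t L K).filter (fun e => e.1 ∉ Rst π (mg π t L K) t) = K
  rw [Rst_mg]
  ext e
  simp only [mg, mg2, Finset.mem_filter, Finset.mem_union]
  tauto

lemma liveProb_mg_mul (p : V × V → ℝ) (t : ℕ) (L K : Finset (V × V)) :
    liveProb p (mg π t L K) * liveProb p (mg2 π t L K) = liveProb p L * liveProb p K := by
  simp only [liveProb_eq, ← Finset.prod_mul_distrib]
  apply Finset.prod_congr rfl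
  intro e _
  by_cases he : e.1 ∈ Rst π L t
  · have h1 : e ∈ mg π t L K ↔ e ∈ L := by
      simp [mg, Finset.mem_union, Finset.mem_filter, he]
    have h2 : e ∈ mg2 π t L K ↔ e ∈ K := by
      simp [mg2, Finset.mem_union, Finset.mem_filter, he]
    simp only [h1, h2]
  · have h1 : e ∈ mg π t L K ↔ e ∈ K := by
      simp [mg, Finset.mem_union, Finset.mem_filter, he]
    have h2 : e ∈ mg2 π t L K ↔ e ∈ L := by
      simp [mg2, Finset.mem_union, Finset.mem_filter, he]
    simp only [h1, h2]
    ring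

lemma spread_mono {p : V × V → ℝ} (hp : ∀ e, 0 ≤ p e ∧ p e ≤ 1)
    {S T : Finset V} (h : S ⊆ T) : spread p S ≤ spread p T := by
  apply Finset.sum_le_sum
  intro L _
  apply mul_le_mul_of_nonneg_left _ (liveProb_nonneg hp L)
  exact_mod_cast Finset.card_le_card (reachSet_mono_seed h)

lemma stepBound (p : V × V → ℝ) (hp : ∀ e, 0 ≤ p e ∧ p e ≤ 1)
    {OPT1 : ℝ} (hO1 : ∀ v : V, spread p {v} ≤ OPT1) (t : ℕ) :
    ∑ L : Finset (V × V), liveProb p L *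
      (((reachSet L (runPolicy π L (t + 1))).card : ℝ)
        - ((reachSet L (runPolicy π L t)).card : ℝ)) ≤ OPT1 := by
  classical
  set w := liveProb p with hw
  have hwn : ∀ L : Finset (V × V), 0 ≤ w L := liveProb_nonneg hp
  -- pointwise gain bound
  have h1 : ∀ L : Finset (V × V),
      w L * (((reachSet L (runPolicy π L (t + 1))).card : ℝ)
        - ((reachSet L (runPolicy π L t)).card : ℝ))
      ≤ w L * ((reachSet (L.filter fun e => e.1 ∉ Rst π L t) {seedAt π L t}).card : ℝ) := by
    intro L
    apply mul_le_mul_of_nonneg_left _ (hwn L)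
    have hsub : reachSet L (runPolicy π L t) ⊆ reachSet L (runPolicy π L (t + 1)) :=
      reachSet_mono_seed (runPolicy_mono π L (Nat.le_succ t))
    have hdiff : ((reachSet L (runPolicy π L (t + 1))).card : ℝ)
        - ((reachSet L (runPolicy π L t)).card : ℝ)
        = ((reachSet L (runPolicy π L (t + 1)) \ reachSet L (runPolicy π L t)).card : ℝ) := by
      rw [Finset.card_sdiff, Finset.inter_eq_left.2 hsub, Nat.cast_sub (Finset.card_le_card hsub)]
    rw [hdiff]
    have hsub2 : reachSet L (runPolicy π L (t + 1)) \ reachSet L (runPolicy π L t)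
        ⊆ reachSet (L.filter fun e => e.1 ∉ Rst π L t) {seedAt π L t} := by
      rw [runPolicy_succ']
      exact gain_subset L (runPolicy π L t) (seedAt π L t)
    exact_mod_cast Finset.card_le_card hsub2
  refine le_trans (Finset.sum_le_sum fun L _ => h1 L) ?_
  -- resampling via the involution (mg, mg2)
  set g : Finset (V × V) → ℝ := fun L =>
    ((reachSet (L.filter fun e => e.1 ∉ Rst π L t) {seedAt π L t}).card : ℝ) with hg
  have h2 : ∑ L : Finset (V × V), w L * g L
      = ∑ x : Finset (V × V) × Finset (V × V), w x.1 * w x.2 * g x.1 := by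
    rw [Fintype.sum_prod_type]
    apply Finset.sum_congr rfl
    intro L _
    simp only [show ∀ y : Finset (V × V), w (L, y).1 * w (L, y).2 * g (L, y).1
      = w y * (w L * g L) from fun y => by ring]
    rw [← Finset.sum_mul, hw, sum_liveProb, one_mul]
  have hΦ : Function.Involutive
      (fun x : Finset (V × V) × Finset (V × V) => (mg π t x.1 x.2, mg2 π t x.1 x.2)) := by
    intro x
    exact Prod.ext (mg_mg π t x.1 x.2) (mg2_mg π t x.1 x.2)
  have h3 : ∑ x : Finset (V × V) × Finset (V × V), w x.1 * w x.2 * g x.1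
      = ∑ x : Finset (V × V) × Finset (V × V),
        w x.1 * w x.2 * ((reachSet (x.2.filter fun e => e.1 ∉ Rst π x.1 t)
          {seedAt π x.1 t}).card : ℝ) := by
    rw [← hΦ.bijective.sum_comp (fun x => w x.1 * w x.2 * g x.1)]
    apply Finset.sum_congr rfl
    intro x _
    simp only []
    rw [hg]
    simp only []
    rw [show (liveProb p (mg π t x.1 x.2) * liveProb p (mg2 π t x.1 x.2))
        = w x.1 * w x.2 from liveProb_mg_mul π p t x.1 x.2]
    rw [mg_free, seedAt_mg]
  rw [h2, h3]
  have h4 : ∑ x : Finset (V × V) × Finset (V × V),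
      w x.1 * w x.2 * ((reachSet (x.2.filter fun e => e.1 ∉ Rst π x.1 t)
        {seedAt π x.1 t}).card : ℝ)
      ≤ ∑ x : Finset (V × V) × Finset (V × V),
        w x.1 * w x.2 * ((reachSet x.2 {seedAt π x.1 t}).card : ℝ) := by
    apply Finset.sum_le_sum
    intro x _
    apply mul_le_mul_of_nonneg_left _ (mul_nonneg (hwn x.1) (hwn x.2))
    exact_mod_cast Finset.card_le_card
      (reachSet_mono_edges (Finset.filter_subset _ _) _)
  refine le_trans h4 ?_
  have h5 : ∑ x : Finset (V × V) × Finset (V × V),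
      w x.1 * w x.2 * ((reachSet x.2 {seedAt π x.1 t}).card : ℝ)
      = ∑ L : Finset (V × V), w L * spread p {seedAt π L t} := by
    rw [Fintype.sum_prod_type]
    apply Finset.sum_congr rfl
    intro L _
    rw [spread, Finset.mul_sum]
    apply Finset.sum_congr rfl
    intro K _
    ring
  rw [h5]
  calc ∑ L : Finset (V × V), w L * spread p {seedAt π L t}
      ≤ ∑ L : Finset (V × V), w L * OPT1 :=
        Finset.sum_le_sum fun L _ => mul_le_mul_of_nonneg_left (hO1 _) (hwn L)
    _ = OPT1 := by rw [← Finset.sum_mul, hw, sum_liveProb, one_mul]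

end aux

/-- Theorem `lemk`: any adaptive policy of length `k` has expected spread at
most `k · OPT_N(G,1) ≤ k · OPT_N(G,k)`; hence the `k`-adaptivity gap is at
most `k`. -/
theorem stmt_12 {V : Type*} [Fintype V] [DecidableEq V]
    (p : V × V → ℝ) (hp : ∀ e, 0 ≤ p e ∧ p e ≤ 1)
    (π : Finset V → (V → Finset V) → V) (k : ℕ) (hk : 1 ≤ k)
    (hkn : k ≤ Fintype.card V)
    (OPT1 OPTk : ℝ)
    (hOPT1 : IsGreatest {x : ℝ | ∃ S : Finset V, S.card = 1 ∧ spread p S = x} OPT1)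
    (hOPTk : IsGreatest {x : ℝ | ∃ S : Finset V, S.card = k ∧ spread p S = x} OPTk) :
    adaptiveSpread p π k ≤ (k : ℝ) * OPT1 ∧ (k : ℝ) * OPT1 ≤ (k : ℝ) * OPTk := by
  classical
  have hO1 : ∀ v : V, spread p {v} ≤ OPT1 := fun v =>
    hOPT1.2 ⟨{v}, Finset.card_singleton v, rfl⟩
  constructor
  · have h1 : adaptiveSpread p π k = ∑ L : Finset (V × V), ∑ t ∈ Finset.range k,
        liveProb p L * (((reachSet L (runPolicy π L (t + 1))).card : ℝ)
          - ((reachSet L (runPolicy π L t)).card : ℝ)) := by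
      rw [adaptiveSpread]
      apply Finset.sum_congr rfl
      intro L _
      rw [← Finset.mul_sum,
        Finset.sum_range_sub (fun t => ((reachSet L (runPolicy π L t)).card : ℝ))]
      norm_num [show runPolicy π L 0 = ∅ from rfl, reachSet_empty]
    rw [h1, Finset.sum_comm]
    calc ∑ t ∈ Finset.range k, ∑ L : Finset (V × V),
          liveProb p L * (((reachSet L (runPolicy π L (t + 1))).card : ℝ)
            - ((reachSet L (runPolicy π L t)).card : ℝ))
        ≤ ∑ _t ∈ Finset.range k, OPT1 :=
          Finset.sum_le_sum fun t _ => stepBound π p hp hO1 t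
      _ = (k : ℝ) * OPT1 := by
          rw [Finset.sum_const, Finset.card_range, nsmul_eq_mul]
  · have h : OPT1 ≤ OPTk := by
      obtain ⟨S1, hc1, hs1⟩ := hOPT1.1
      obtain ⟨Sk, hsub, _, hck⟩ := Finset.exists_subsuperset_card_eq
        (n := k) (Finset.subset_univ S1) (by omega) (by rwa [Finset.card_univ])
      calc OPT1 = spread p S1 := hs1.symm
        _ ≤ spread p Sk := spread_mono hp hsub
        _ ≤ OPTk := hOPTk.2 ⟨Sk, hck, rfl⟩
    exact mul_le_mul_of_nonneg_left h (by positivity)
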